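/- Let $p \geq 2$ and let $v_1, v_2 \in \mathbb{R}^n$. Then there exist positive constants $c_p, C_p$ depending only on $p$ such that $c_p (\max\{|v_1|, |v_2|\})^{p-2} \leq \int_0^1 |v_1 + t v_2|^{p-2} \, dt \leq C_p (\max\{|v_1|, |v_2|\})^{p-2}$. -/
import Mathlib


open MeasureTheory intervalIntegral

/-- If a continuous nonneg function is at least `m` on a subinterval `[s,e] ⊆ [0,1]`,
then its integral over `[0,1]` is at least `(e - s) * m`. -/
lemma aux_lower (f : ℝ → ℝ) (hf : Continuous f) (hnn : ∀ t, 0 ≤ f t)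
    (s e m : ℝ) (h0 : 0 ≤ s) (hse : s ≤ e) (he : e ≤ 1)
    (hm : ∀ t ∈ Set.Icc s e, m ≤ f t) :
    (e - s) * m ≤ ∫ t in (0:ℝ)..1, f t := by
  have hint : ∀ a b : ℝ, IntervalIntegrable f volume a b := fun a b =>
    hf.intervalIntegrable a b
  have h1a : (∫ t in (0:ℝ)..s, f t) + ∫ t in s..e, f t = ∫ t in (0:ℝ)..e, f t :=
    integral_add_adjacent_intervals (hint 0 s) (hint s e)
  have h1b : (∫ t in (0:ℝ)..e, f t) + ∫ t in e..(1:ℝ), f t = ∫ t in (0:ℝ)..1, f t :=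
    integral_add_adjacent_intervals (hint 0 e) (hint e 1)
  have h2 : (0:ℝ) ≤ ∫ t in (0:ℝ)..s, f t :=
    integral_nonneg h0 (fun t _ => hnn t)
  have h3 : (0:ℝ) ≤ ∫ t in e..(1:ℝ), f t :=
    integral_nonneg he (fun t _ => hnn t)
  have h4 : (e - s) * m ≤ ∫ t in s..e, f t := by
    have := integral_mono_on hse (_root_.intervalIntegrable_const (c := m)) (hint s e) hm
    simpa using this
  linarith

theorem stmt_1 (n : ℕ) (p : ℝ) (hp : 2 ≤ p) :
    ∃ c C : ℝ, 0 < c ∧ 0 < C ∧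
      ∀ v₁ v₂ : EuclideanSpace ℝ (Fin n),
        c * (max ‖v₁‖ ‖v₂‖) ^ (p - 2) ≤ ∫ t in (0:ℝ)..1, ‖v₁ + t • v₂‖ ^ (p - 2) ∧
        (∫ t in (0:ℝ)..1, ‖v₁ + t • v₂‖ ^ (p - 2)) ≤ C * (max ‖v₁‖ ‖v₂‖) ^ (p - 2) := by
  have hq : (0:ℝ) ≤ p - 2 := by linarith
  refine ⟨4⁻¹ * (4:ℝ)⁻¹ ^ (p - 2), (2:ℝ) ^ (p - 2), ?_, ?_, ?_⟩
  · positivity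
  · positivity
  intro v₁ v₂
  set M : ℝ := max ‖v₁‖ ‖v₂‖ with hMdef
  have hM0 : 0 ≤ M := le_trans (norm_nonneg v₁) (le_max_left _ _)
  have h1M : ‖v₁‖ ≤ M := le_max_left _ _
  have h2M : ‖v₂‖ ≤ M := le_max_right _ _
  have hfc : Continuous fun t : ℝ => ‖v₁ + t • v₂‖ ^ (p - 2) :=
    ((continuous_const.add (continuous_id.smul continuous_const)).norm).rpow_const
      (fun t => Or.inr hq)
  have hnn : ∀ t : ℝ, 0 ≤ ‖v₁ + t • v₂‖ ^ (p - 2) := fun t =>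
    Real.rpow_nonneg (norm_nonneg _) _
  constructor
  · -- lower bound
    have key : ∀ s e : ℝ, 0 ≤ s → s ≤ e → e ≤ 1 → 4⁻¹ ≤ e - s →
        (∀ t ∈ Set.Icc s e, M / 4 ≤ ‖v₁ + t • v₂‖) →
        4⁻¹ * (4:ℝ)⁻¹ ^ (p - 2) * M ^ (p - 2) ≤
          ∫ t in (0:ℝ)..1, ‖v₁ + t • v₂‖ ^ (p - 2) := by
      intro s e h0 hse he hlen hbig
      have hkey := aux_lower _ hfc hnn s e ((M / 4) ^ (p - 2)) h0 hse he
        (fun t ht => Real.rpow_le_rpow (by positivity) (hbig t ht) hq)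
      have heq : (M / 4) ^ (p - 2) = (4:ℝ)⁻¹ ^ (p - 2) * M ^ (p - 2) := by
        rw [div_eq_inv_mul, mul_comm, Real.mul_rpow hM0 (by norm_num), mul_comm]
      calc 4⁻¹ * (4:ℝ)⁻¹ ^ (p - 2) * M ^ (p - 2)
          = 4⁻¹ * ((M / 4) ^ (p - 2)) := by rw [heq]; ring
        _ ≤ (e - s) * ((M / 4) ^ (p - 2)) := by
            have : (0:ℝ) ≤ (M / 4) ^ (p - 2) := Real.rpow_nonneg (by positivity) _
            nlinarith
        _ ≤ _ := hkey
    rcases le_or_gt ‖v₂‖ (2 * ‖v₁‖) with hcase | hcase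
    · -- ‖v₂‖ ≤ 2‖v₁‖ : use [0, 1/4]
      refine key 0 4⁻¹ le_rfl (by norm_num) (by norm_num) (by norm_num) ?_
      intro t ht
      have hM2 : M ≤ 2 * ‖v₁‖ := max_le (by linarith [norm_nonneg v₁]) hcase
      have hlow : ‖v₁‖ ≤ ‖v₁ + t • v₂‖ + ‖t • v₂‖ := by
        calc ‖v₁‖ = ‖(v₁ + t • v₂) - t • v₂‖ := by rw [add_sub_cancel_right]
          _ ≤ ‖v₁ + t • v₂‖ + ‖t • v₂‖ := norm_sub_le _ _
      have hts : ‖t • v₂‖ = |t| * ‖v₂‖ := by rw [norm_smul, Real.norm_eq_abs]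
      have habs : |t| ≤ 4⁻¹ := abs_le.mpr ⟨by linarith [ht.1], ht.2⟩
      have htv : ‖t • v₂‖ ≤ ‖v₂‖ / 4 := by
        rw [hts]
        nlinarith [norm_nonneg v₂, abs_nonneg t]
      linarith
    · -- 2‖v₁‖ < ‖v₂‖ : use [3/4, 1]
      refine key (3/4) 1 (by norm_num) (by norm_num) le_rfl (by norm_num) ?_
      intro t ht
      have hMv : M = ‖v₂‖ := max_eq_right (by linarith [norm_nonneg v₁])
      have hlow : ‖t • v₂‖ ≤ ‖v₁ + t • v₂‖ + ‖v₁‖ := by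
        calc ‖t • v₂‖ = ‖(v₁ + t • v₂) - v₁‖ := by rw [add_sub_cancel_left]
          _ ≤ ‖v₁ + t • v₂‖ + ‖v₁‖ := norm_sub_le _ _
      have hts : ‖t • v₂‖ = t * ‖v₂‖ := by
        rw [norm_smul, Real.norm_eq_abs, abs_of_nonneg (by linarith [ht.1])]
      have htv : 3 / 4 * ‖v₂‖ ≤ ‖t • v₂‖ := by
        rw [hts]
        nlinarith [norm_nonneg v₂, ht.1]
      rw [hMv]
      linarith
  · -- upper bound
    have hub : ∀ t ∈ Set.Icc (0:ℝ) 1,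
        ‖v₁ + t • v₂‖ ^ (p - 2) ≤ (2:ℝ) ^ (p - 2) * M ^ (p - 2) := by
      intro t ht
      have hnorm : ‖v₁ + t • v₂‖ ≤ 2 * M := by
        have hts : ‖t • v₂‖ = |t| * ‖v₂‖ := by rw [norm_smul, Real.norm_eq_abs]
        have habs : |t| ≤ 1 := abs_le.mpr ⟨by linarith [ht.1], ht.2⟩
        have h2 : |t| * ‖v₂‖ ≤ 1 * M :=
          mul_le_mul habs h2M (norm_nonneg _) zero_le_one
        calc ‖v₁ + t • v₂‖ ≤ ‖v₁‖ + ‖t • v₂‖ := norm_add_le _ _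
          _ = ‖v₁‖ + |t| * ‖v₂‖ := by rw [hts]
          _ ≤ 2 * M := by linarith
      calc ‖v₁ + t • v₂‖ ^ (p - 2) ≤ (2 * M) ^ (p - 2) :=
            Real.rpow_le_rpow (norm_nonneg _) hnorm hq
        _ = (2:ℝ) ^ (p - 2) * M ^ (p - 2) := Real.mul_rpow (by norm_num) hM0
    have := integral_mono_on (by norm_num : (0:ℝ) ≤ 1)
      (hfc.intervalIntegrable 0 1)
      (_root_.intervalIntegrable_const (μ := volume) (c := (2:ℝ) ^ (p - 2) * M ^ (p - 2))) hub
    simpa using this
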